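/- arXiv:2006.06566 — 10 statements merged into one kernel-verified Lean document; each statement's English description precedes it below -/
import Mathlib

section
/- Let $u^L \in \mathbb{R}^{m \times n}$ be a leader payoff matrix, extended bilinearly to mixed strategies, and let $M = \max_{\mathbf{y} \in \Delta^{m-1}} \min_{\ell \in [n]} u^L(\mathbf{y},\ell)$ be the leader's maximin utility. Fix $\mathbf{x} \in \Delta^{m-1}$ and $j \in [n]$, and let $U_j(\mathbf{x}) = \{\mathbf{y} \in \Delta^{m-1} : u^L(\mathbf{y},j) > u^L(\mathbf{x},j)\}$ with closure $\overline{U_j(\mathbf{x})}$. Then $u^L(\mathbf{x},j) \geq M$ if and only if $u^L(\mathbf{x},j) \geq \max_{\mathbf{y} \in \overline{U_j(\mathbf{x})}} \min_{\ell \in [n] \setminus \{j\}} u^L(\mathbf{y},\ell)$ (with the convention $\max \emptyset = -\infty$, requiring $n \geq 2$). -/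
open Finset

noncomputable section

def simplex (m : ℕ) : Set (Fin m → ℝ) := stdSimplex ℝ (Fin m)

def util {m n : ℕ} (u : Fin m → Fin n → ℝ) (y : Fin m → ℝ) (j : Fin n) : ℝ :=
  ∑ i, y i * u i j

/-- Lemma 1 (M–V): $u^L(x,j) \ge M$ iff $u^L(x,j) \ge \max_{y \in \overline{U_j(x)}} \min_{\ell \ne j} u^L(y,\ell)$. -/
theorem stmt_0 (m n : ℕ) (hm : 1 ≤ m) (hn : 2 ≤ n)
    (uL : Fin m → Fin n → ℝ) (x : Fin m → ℝ) (hx : x ∈ simplex m) (j : Fin n) :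
    (∀ y ∈ simplex m, ∃ ℓ, util uL y ℓ ≤ util uL x j) ↔
    (∀ y ∈ closure {z | z ∈ simplex m ∧ util uL x j < util uL z j},
      ∃ ℓ, ℓ ≠ j ∧ util uL y ℓ ≤ util uL x j) := by
  have hcont : ∀ ℓ : Fin n, Continuous fun z : Fin m → ℝ => util uL z ℓ := by
    intro ℓ
    unfold util
    exact continuous_finset_sum _ fun i _ => (continuous_apply i).mul continuous_const
  constructor
  · intro h y hy
    set C : Set (Fin m → ℝ) :=
      ⋃ ℓ ∈ ({j}ᶜ : Set (Fin n)), {z : Fin m → ℝ | util uL z ℓ ≤ util uL x j} with hCdef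
    have hC : IsClosed C := by
      apply Set.Finite.isClosed_biUnion (Set.toFinite _)
      intro ℓ _
      exact isClosed_le (hcont ℓ) continuous_const
    have hsub : {z | z ∈ simplex m ∧ util uL x j < util uL z j} ⊆ C := by
      intro z hz
      obtain ⟨ℓ, hℓ⟩ := h z hz.1
      have hne : ℓ ≠ j := by
        intro he; subst he; exact absurd hℓ (not_le.mpr hz.2)
      exact Set.mem_biUnion hne hℓ
    have : y ∈ C := closure_minimal hsub hC hy
    obtain ⟨ℓ, hne, hle⟩ := Set.mem_iUnion₂.mp this
    exact ⟨ℓ, hne, hle⟩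
  · intro h y hy
    by_cases hc : util uL y j ≤ util uL x j
    · exact ⟨j, hc⟩
    · obtain ⟨ℓ, _, hle⟩ := h y (subset_closure ⟨hy, not_le.mp hc⟩)
      exact ⟨ℓ, hle⟩
end
end

section
/- Let $u^L \in \mathbb{R}^{m \times n}$ with maximin utility $M$, and suppose $(\mathbf{x},j)$ satisfies $u^L(\mathbf{x},j) \geq M$. Define $\widetilde{BR}(\mathbf{y}) = \{j\}$ if $\mathbf{y} = \mathbf{x}$, and $\widetilde{BR}(\mathbf{y}) = \arg\min_{\ell \in [n]} u^L(\mathbf{y},\ell)$ otherwise. Then $(\mathbf{x},j)$ is an SSE of the game $(u^L, \widetilde{BR})$. -/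
open Finset

noncomputable section

/-- If $u^L(x,j) \ge M$, the threatening correspondence induces $(x,j)$ as an SSE. -/
theorem stmt_2 (m n : ℕ) (uL : Fin m → Fin n → ℝ)
    (x : Fin m → ℝ) (hx : x ∈ simplex m) (j : Fin n)
    (hM : ∀ y ∈ simplex m, ∃ ℓ, util uL y ℓ ≤ util uL x j)
    (BR : (Fin m → ℝ) → Set (Fin n))
    (hBRx : BR x = {j})
    (hBRy : ∀ y, y ≠ x → BR y = {ℓ | ∀ k, util uL y ℓ ≤ util uL y k}) :
    j ∈ BR x ∧ ∀ y ∈ simplex m, ∀ ℓ ∈ BR y, util uL y ℓ ≤ util uL x j := by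
  constructor
  · rw [hBRx]; rfl
  · intro y hy ℓ hℓ
    by_cases h : y = x
    · subst h
      rw [hBRx] at hℓ
      rw [hℓ]
    · rw [hBRy y h] at hℓ
      obtain ⟨k, hk⟩ := hM y hy
      exact le_trans (hℓ k) hk
end
end

section
/- (Example: no payoff matrix realizes the polytopal correspondence.) Let $u^L = \begin{pmatrix} 0 & 1 & 1 \\ 1 & -1/2 & 1/2 \\ 1 & 1/2 & -1/2 \end{pmatrix}$, and define regions $R_1 = \{\mathbf{y} \in \Delta^2 : y_1 \geq y_2 + y_3\}$, $R_2 = \{\mathbf{y} \in \Delta^2 : y_1 \leq y_2+y_3, y_2 \geq y_3\}$, $R_3 = \{\mathbf{y} \in \Delta^2 : y_1 \leq y_2+y_3, y_2 \leq y_3\}$. There is no matrix $\tilde{u}^F \in \mathbb{R}^{3 \times 3}$ such that for all $\mathbf{y} \in \Delta^2$ and $\ell \in \{1,2,3\}$: $\ell \in \arg\max_{k} \tilde{u}^F(\mathbf{y},k)$ if and only if $\mathbf{y} \in R_\ell$. -/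
open Finset

noncomputable section

/-- Example: no payoff matrix realizes the polytopal best response correspondence
given by the regions $R_1, R_2, R_3$. -/
theorem stmt_6 :
    ¬ ∃ v : Fin 3 → Fin 3 → ℝ, ∀ y ∈ simplex 3, ∀ ℓ : Fin 3,
      ((∀ k, util v y k ≤ util v y ℓ) ↔ y ∈
        (![{z : Fin 3 → ℝ | z 1 + z 2 ≤ z 0},
           {z : Fin 3 → ℝ | z 0 ≤ z 1 + z 2 ∧ z 2 ≤ z 1},
           {z : Fin 3 → ℝ | z 0 ≤ z 1 + z 2 ∧ z 1 ≤ z 2}] : Fin 3 → Set (Fin 3 → ℝ)) ℓ) := by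
  rintro ⟨v, h⟩
  set p : Fin 3 → ℝ := ![1/2, 1/2, 0] with hpdef
  set q : Fin 3 → ℝ := ![1/2, 0, 1/2] with hqdef
  set s : Fin 3 → ℝ := ![1/2, 1/4, 1/4] with hsdef
  have hps : p ∈ simplex 3 := by
    refine ⟨fun i => ?_, ?_⟩
    · fin_cases i <;> norm_num [hpdef]
    · simp [Fin.sum_univ_three, hpdef]; norm_num
  have hqs : q ∈ simplex 3 := by
    refine ⟨fun i => ?_, ?_⟩
    · fin_cases i <;> norm_num [hqdef]
    · simp [Fin.sum_univ_three, hqdef]; norm_num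
  have hss : s ∈ simplex 3 := by
    refine ⟨fun i => ?_, ?_⟩
    · fin_cases i <;> norm_num [hsdef]
    · simp [Fin.sum_univ_three, hsdef]; norm_num
  -- p is in R1
  have h1 : ∀ k, util v p k ≤ util v p 0 := (h p hps 0).mpr (by
    simp only [Matrix.cons_val_zero, Set.mem_setOf_eq, hpdef, Matrix.cons_val_two, Matrix.tail_cons, Matrix.head_cons]
    norm_num)
  -- p is not in R3
  have h2 : ¬ (∀ k, util v p k ≤ util v p 2) := by
    intro hk
    have := (h p hps 2).mp hk
    simp only [Matrix.cons_val_two, Matrix.tail_cons, Matrix.head_cons,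
      Set.mem_setOf_eq, hpdef] at this
    norm_num at this
  have hlt : util v p 2 < util v p 0 := by
    by_contra hle
    push_neg at hle
    exact h2 (fun k => (h1 k).trans hle)
  -- q is in R1 and R3
  have hq1 : util v q 2 ≤ util v q 0 := (h q hqs 0).mpr (by
    simp only [Matrix.cons_val_zero, Set.mem_setOf_eq, hqdef, Matrix.cons_val_two, Matrix.tail_cons, Matrix.head_cons]
    norm_num) 2
  have hq2 : util v q 0 ≤ util v q 2 := (h q hqs 2).mpr (by
    simp only [Matrix.cons_val_two, Matrix.tail_cons, Matrix.head_cons,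
      Set.mem_setOf_eq, hqdef]
    norm_num) 0
  -- s is in R1 and R3
  have hs1 : util v s 2 ≤ util v s 0 := (h s hss 0).mpr (by
    simp only [Matrix.cons_val_zero, Set.mem_setOf_eq, hsdef, Matrix.cons_val_two, Matrix.tail_cons, Matrix.head_cons]
    norm_num) 2
  have hs2 : util v s 0 ≤ util v s 2 := (h s hss 2).mpr (by
    simp only [Matrix.cons_val_two, Matrix.tail_cons, Matrix.head_cons,
      Set.mem_setOf_eq, hsdef]
    norm_num) 0
  simp only [util, Fin.sum_univ_three, hpdef, hqdef, hsdef,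
    Matrix.cons_val_zero, Matrix.cons_val_one, Matrix.head_cons,
    Matrix.cons_val_two, Matrix.tail_cons] at hlt hq1 hq2 hs1 hs2
  linarith
end
end

section
/- Fix $(\mathbf{x},j)$, a set $\widehat{S} \subseteq [n] \setminus \{j\}$, $k \in \arg\min_{\ell \in \widehat{S}} u^L(\mathbf{x},\ell)$, and $\alpha > 0$. Define $\tilde{u}^F(\mathbf{y},\ell) = -u^L(\mathbf{y},\ell)$ for $\ell \in \widehat{S}$, $\tilde{u}^F(\mathbf{y},\ell) = -u^L(\mathbf{y},k) - 1$ for $\ell \in [n] \setminus (\widehat{S} \cup \{j\})$, and $\tilde{u}^F(\mathbf{y},j) = -u^L(\mathbf{y},k) + \alpha(u^L(\mathbf{x},j) - u^L(\mathbf{y},j))$. Then: (i) $j \in \widetilde{BR}(\mathbf{x})$; (ii) $\widetilde{BR}(\mathbf{y}) \subseteq \widehat{S} \cup \{j\}$ for all $\mathbf{y} \in \Delta^{m-1}$; (iii) if $j \in \widetilde{BR}(\mathbf{y})$ then $u^L(\mathbf{y},j) \leq u^L(\mathbf{x},j)$; (iv) if $\ell \in \widetilde{BR}(\mathbf{y})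 \cap \widehat{S}$ then $u^L(\mathbf{y},\ell) = \min_{\ell' \in \widehat{S}} u^L(\mathbf{y},\ell')$. Here $\widetilde{BR}(\mathbf{y}) = \arg\max_{\ell \in [n]} \tilde{u}^F(\mathbf{y},\ell)$. -/
open Finset

noncomputable section

/-- Properties (i)–(iv) of the constructed fake payoff function. -/
theorem stmt_7 (m n : ℕ) (uL : Fin m → Fin n → ℝ)
    (x : Fin m → ℝ) (hx : x ∈ simplex m) (j : Fin n)
    (S : Finset (Fin n)) (hS : S.Nonempty) (hjS : j ∉ S)
    (k : Fin n) (hkS : k ∈ S) (hk : ∀ ℓ ∈ S, util uL x k ≤ util uL x ℓ)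
    (α : ℝ) (hα : 0 < α)
    (v : (Fin m → ℝ) → Fin n → ℝ)
    (hv : ∀ y ℓ, v y ℓ =
      if ℓ ∈ S then -util uL y ℓ
      else if ℓ = j then -util uL y k + α * (util uL x j - util uL y j)
      else -util uL y k - 1) :
    (∀ ℓ, v x ℓ ≤ v x j) ∧
    (∀ y ∈ simplex m, ∀ ℓ, (∀ k', v y k' ≤ v y ℓ) → ℓ ∈ S ∨ ℓ = j) ∧
    (∀ y ∈ simplex m, (∀ k', v y k' ≤ v y j) → util uL y j ≤ util uL x j) ∧
    (∀ y ∈ simplex m, ∀ ℓ ∈ S, (∀ k', v y k' ≤ v y ℓ) →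
      ∀ ℓ' ∈ S, util uL y ℓ ≤ util uL y ℓ') := by
  have hvj : ∀ y, v y j = -util uL y k + α * (util uL x j - util uL y j) := by
    intro y; rw [hv]; simp [hjS]
  refine ⟨?_, ?_, ?_, ?_⟩
  · intro ℓ
    rw [hvj]
    have hxj : -util uL x k + α * (util uL x j - util uL x j) = -util uL x k := by ring
    rw [hxj, hv]
    by_cases h1 : ℓ ∈ S
    · simp only [h1, if_true]
      linarith [hk ℓ h1]
    · by_cases h2 : ℓ = j
      · simp [h1, h2, hjS]
      · simp [h1, h2]
  · intro y _ ℓ hℓ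
    by_contra hc
    push_neg at hc
    have h := hℓ k
    rw [hv y k, hv y ℓ] at h
    simp [hkS, hc.1, hc.2] at h
    linarith
  · intro y _ h
    have hk' := h k
    rw [hv y k, hvj] at hk'
    simp [hkS] at hk'
    nlinarith
  · intro y _ ℓ hℓS h ℓ' hℓ'
    have h' := h ℓ'
    rw [hv y ℓ, hv y ℓ'] at h'
    simp [hℓS, hℓ'] at h'
    linarith
end
end

section
/- With the setup of the previous construction (payoff function $\tilde{u}^F$ defined via $\widehat{S}$, $k$, $\alpha$, with induced $\widetilde{BR}$ and $j \in \widetilde{BR}(\mathbf{x})$): if $\min_{\ell' \in \widehat{S}} u^L(\mathbf{y},\ell') \leq u^L(\mathbf{x},j)$ holds for all $\mathbf{y} \in \Delta^{m-1}$ such that $\widetilde{BR}(\mathbf{y}) \cap \widehat{S} \neq \emptyset$, then $(\mathbf{x},j)$ is an SSE of the game $(u^L, \tilde{u}^F)$, i.e., $u^L(\mathbf{x},j) \geq u^L(\mathbf{y},\ell)$ for every $\mathbf{y} \in \Delta^{m-1}$ and $\ell \in \widetilde{BR}(\mathbf{y})$. -/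
open Finset

noncomputable section

/-- Lemma (key condition): if the min over $\widehat S$ is at most $u^L(x,j)$ whenever
some member of $\widehat S$ is a fake best response, then $(x,j)$ is an SSE of
$(u^L, \tilde u^F)$. -/
theorem stmt_8 (m n : ℕ) (uL : Fin m → Fin n → ℝ)
    (x : Fin m → ℝ) (hx : x ∈ simplex m) (j : Fin n)
    (S : Finset (Fin n)) (hS : S.Nonempty) (hjS : j ∉ S)
    (k : Fin n) (hkS : k ∈ S) (hk : ∀ ℓ ∈ S, util uL x k ≤ util uL x ℓ)
    (α : ℝ) (hα : 0 < α)
    (v : (Fin m → ℝ) → Fin n → ℝ)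
    (hv : ∀ y ℓ, v y ℓ =
      if ℓ ∈ S then -util uL y ℓ
      else if ℓ = j then -util uL y k + α * (util uL x j - util uL y j)
      else -util uL y k - 1)
    (hcond : ∀ y ∈ simplex m, (∃ ℓ ∈ S, ∀ k', v y k' ≤ v y ℓ) →
      ∃ ℓ' ∈ S, util uL y ℓ' ≤ util uL x j) :
    (∀ ℓ, v x ℓ ≤ v x j) ∧
    ∀ y ∈ simplex m, ∀ ℓ, (∀ k', v y k' ≤ v y ℓ) → util uL y ℓ ≤ util uL x j := by

  have hvxj : v x j = -util uL x k := by
    rw [hv]; simp [hjS]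
  constructor
  · intro ℓ
    rw [hv, hvxj]
    by_cases h1 : ℓ ∈ S
    · simp only [h1, if_true]
      linarith [hk ℓ h1]
    · by_cases h2 : ℓ = j
      · subst h2; simp [hjS]
      · simp only [h1, h2, if_false]
        linarith
  · intro y hy ℓ hℓ
    by_cases h1 : ℓ ∈ S
    · obtain ⟨ℓ', hℓ'S, hℓ'⟩ := hcond y hy ⟨ℓ, h1, hℓ⟩
      have := hℓ ℓ'
      rw [hv, hv] at this
      simp only [h1, hℓ'S, if_true] at this
      linarith
    · by_cases h2 : ℓ = j
      · subst h2
        have := hℓ k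
        rw [hv, hv] at this
        simp only [h1, hkS, if_true, if_false, if_pos rfl] at this
        nlinarith
      · have := hℓ k
        rw [hv, hv] at this
        simp only [h1, h2, hkS, if_true, if_false] at this
        linarith
end
end

section
/- Suppose $u^L(\mathbf{x},j) < M_{-j} := \max_{\mathbf{y} \in \Delta^{m-1}} \min_{\ell \in [n]\setminus\{j\}} u^L(\mathbf{y},\ell)$ and $u^L(\mathbf{x},j) \geq V := \max_{\mathbf{y} \in \overline{U_j(\mathbf{x})}} \min_{\ell \in [n]\setminus\{j\}} u^L(\mathbf{y},\ell)$, where $U_j(\mathbf{x}) = \{\mathbf{y} \in \Delta^{m-1} : u^L(\mathbf{y},j) > u^L(\mathbf{x},j)\}$ is nonempty and $\mathbf{y}^* \in \overline{U_j(\mathbf{x})}$ attains $\min_{\ell \neq j} u^L(\mathbf{y}^*,\ell) = V$. Then $u^L(\mathbf{y}^*,j) = u^L(\mathbf{x},j)$. -/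
open Finset

noncomputable section

lemma util_continuous {m n : ℕ} (u : Fin m → Fin n → ℝ) (j : Fin n) :
    Continuous fun y : Fin m → ℝ => util u y j := by
  unfold util
  exact continuous_finset_sum _ fun i _ => (continuous_apply i).mul continuous_const

lemma util_comb {m n : ℕ} (u : Fin m → Fin n → ℝ) (y z : Fin m → ℝ) (t : ℝ) (ℓ : Fin n) :
    util u (fun i => (1 - t) * y i + t * z i) ℓ
      = (1 - t) * util u y ℓ + t * util u z ℓ := by
  simp only [util, Finset.mul_sum, ← Finset.sum_add_distrib]
  exact Finset.sum_congr rfl fun i _ => by ring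

/-- Lemma: $u^L(y^*, j) = u^L(x, j)$. -/
theorem stmt_9 (m n : ℕ) (hn : 2 ≤ n) (uL : Fin m → Fin n → ℝ)
    (x : Fin m → ℝ) (hx : x ∈ simplex m) (j : Fin n)
    (hMj : ∃ z ∈ simplex m, ∀ ℓ, ℓ ≠ j → util uL x j < util uL z ℓ)
    (hU : ∃ y ∈ simplex m, util uL x j < util uL y j)
    (V : ℝ) (ystar : Fin m → ℝ)
    (hystar : ystar ∈ closure {z | z ∈ simplex m ∧ util uL x j < util uL z j})
    (hmin1 : ∀ ℓ, ℓ ≠ j → V ≤ util uL ystar ℓ)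
    (hmin2 : ∃ ℓ, ℓ ≠ j ∧ util uL ystar ℓ = V)
    (hVmax : ∀ y ∈ closure {z | z ∈ simplex m ∧ util uL x j < util uL z j},
      ∃ ℓ, ℓ ≠ j ∧ util uL y ℓ ≤ V)
    (hxV : V ≤ util uL x j) :
    util uL ystar j = util uL x j := by
  -- y* is in the simplex
  have hyS : ystar ∈ simplex m := by
    have : closure {z | z ∈ simplex m ∧ util uL x j < util uL z j} ⊆ simplex m :=
      closure_minimal (fun z hz => hz.1) (isClosed_stdSimplex ℝ (Fin m))
    exact this hystar
  -- u(y*,j) ≥ u(x,j)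
  have hge : util uL x j ≤ util uL ystar j := by
    have hcl : IsClosed {z : Fin m → ℝ | util uL x j ≤ util uL z j} :=
      isClosed_le continuous_const (util_continuous uL j)
    have : closure {z | z ∈ simplex m ∧ util uL x j < util uL z j}
        ⊆ {z : Fin m → ℝ | util uL x j ≤ util uL z j} :=
      closure_minimal (fun z hz => le_of_lt hz.2) hcl
    exact this hystar
  by_contra hne
  have hlt : util uL x j < util uL ystar j := lt_of_le_of_ne hge (Ne.symm hne)
  obtain ⟨z, hzS, hzℓ⟩ := hMj
  set A := util uL ystar j with hA
  set B := util uL z j with hB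
  set δ := A - util uL x j with hδ
  have hδpos : 0 < δ := by simp [hδ]; linarith
  set t := min (1/2 : ℝ) (δ / (2 * (|B - A| + 1))) with ht
  have habs : 0 ≤ |B - A| := abs_nonneg _
  have htpos : 0 < t := by
    apply lt_min (by norm_num)
    positivity
  have htle : t ≤ 1/2 := min_le_left _ _
  have ht2 : t * |B - A| < δ := by
    have h1 : t ≤ δ / (2 * (|B - A| + 1)) := min_le_right _ _
    have h2 : t * |B - A| ≤ (δ / (2 * (|B - A| + 1))) * |B - A| :=
      mul_le_mul_of_nonneg_right h1 habs
    calc t * |B - A| ≤ (δ / (2 * (|B - A| + 1))) * |B - A| := h2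
      _ < δ := by
        rw [div_mul_eq_mul_div, div_lt_iff₀ (by positivity)]
        nlinarith
  set w := fun i => (1 - t) * ystar i + t * z i with hw
  have hwS : w ∈ simplex m := by
    have := (convex_stdSimplex ℝ (Fin m)) hyS hzS (by linarith) (le_of_lt htpos)
      (by ring : (1 - t) + t = 1)
    convert this using 1
    all_goals rfl
  have hwj : util uL x j < util uL w j := by
    have := util_comb uL ystar z t j
    rw [hw, this]
    have : (1 - t) * A + t * B = A + t * (B - A) := by ring
    rw [← hA, ← hB, this]
    have := neg_abs_le (B - A)
    have h3 : t * (B - A) ≥ -(t * |B - A|) := by nlinarith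
    have : util uL x j = A - δ := by rw [hδ]; ring
    linarith
  have hwU : w ∈ closure {z | z ∈ simplex m ∧ util uL x j < util uL z j} :=
    subset_closure ⟨hwS, hwj⟩
  obtain ⟨ℓ, hℓ, hle⟩ := hVmax w hwU
  have h1 : V ≤ util uL ystar ℓ := hmin1 ℓ hℓ
  have h2 : util uL x j < util uL z ℓ := hzℓ ℓ hℓ
  have h3 : util uL w ℓ = (1 - t) * util uL ystar ℓ + t * util uL z ℓ := util_comb uL ystar z t ℓ
  nlinarith
end
end

section
/- In the setting where $u^L(\mathbf{x},j) < M_{-j}$, $u^L(\mathbf{x},j) \geq V$, $U_j(\mathbf{x}) \neq \emptyset$: writing $u^L(\mathbf{y},\ell) = \mathbf{g}_\ell \cdot (\mathbf{y}-\mathbf{y}^*) + u^L(\mathbf{y}^*,\ell)$ in coordinates $(y_1,\dots,y_{m-1})$, with $B = \{i \in [m] : \mathbf{e}_i \cdot \mathbf{y}^* = \beta_i\}$ the tight simplex boundary constraints at $\mathbf{y}^*$ and $S = \{\ell \neq j : u^L(\mathbf{y}^*,\ell) = V\}$, the vector $-\mathbf{g}_j$ lies in the conic hull of $\{\mathbf{g}_\ell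 : \ell \in S\} \cup \{\mathbf{e}_i : i \in B\}$; i.e., $-\mathbf{g}_j = \sum_{\ell \in S} \lambda_\ell \mathbf{g}_\ell + \sum_{i \in B} \mu_i \mathbf{e}_i$ with all $\lambda_\ell, \mu_i \geq 0$. -/
open Finset

noncomputable section

/-- The simplex in \$(m-1)\$-coordinates: \$y \ge 0\$ componentwise and \$\sum_i y_i \le 1\$. -/
def simplexCoord (d : ℕ) : Set (Fin d → ℝ) := {y | (∀ i, 0 ≤ y i) ∧ ∑ i, y i ≤ 1}

/-- The vectors of the \$m\$ boundary constraints \$e_i \cdot y \ge \beta_i\$ of the simplex. -/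
def bvec (d : ℕ) (i : Fin (d + 1)) : Fin d → ℝ :=
  if h : (i : ℕ) < d then Pi.single ⟨i, h⟩ 1 else fun _ => -1

/-- The constants of the boundary constraints. -/
def bconst (d : ℕ) (i : Fin (d + 1)) : ℝ := if (i : ℕ) < d then 0 else -1

/-- Inner product on \$\mathbb{R}^{d}\$. -/
def dotp {d : ℕ} (a b : Fin d → ℝ) : ℝ := ∑ i, a i * b i


lemma dotp_sub_mul_right {d : ℕ} (v u t : Fin d → ℝ) (c : ℝ) :
    dotp v (fun i => u i - c * t i) = dotp v u - c * dotp v t := by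
  simp only [dotp, Finset.mul_sum, ← Finset.sum_sub_distrib]
  exact Finset.sum_congr rfl fun i _ => by ring

lemma dotp_sub_mul_left {d : ℕ} (u t v : Fin d → ℝ) (c : ℝ) :
    dotp (fun i => u i - c * t i) v = dotp u v - c * dotp t v := by
  simp only [dotp, Finset.mul_sum, ← Finset.sum_sub_distrib]
  exact Finset.sum_congr rfl fun i _ => by ring

lemma dotp_mul_right {d : ℕ} (v t : Fin d → ℝ) (c : ℝ) :
    dotp v (fun i => c * t i) = c * dotp v t := by
  simp only [dotp, Finset.mul_sum]
  exact Finset.sum_congr rfl fun i _ => by ring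

lemma dotp_add_right {d : ℕ} (v u t : Fin d → ℝ) :
    dotp v (fun i => u i + t i) = dotp v u + dotp v t := by
  simp only [dotp, ← Finset.sum_add_distrib]
  exact Finset.sum_congr rfl fun i _ => by ring

lemma dotp_neg_left {d : ℕ} (v t : Fin d → ℝ) : dotp (-v) t = - dotp v t := by
  simp [dotp, Finset.sum_neg_distrib]

lemma dotp_bvec {d : ℕ} (i : Fin (d + 1)) (y : Fin d → ℝ) :
    dotp (bvec d i) y = if h : (i : ℕ) < d then y ⟨i, h⟩ else -∑ k, y k := by
  unfold dotp bvec
  split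
  · rename_i h
    simp [Pi.single_apply, ite_mul]
  · simp [Finset.sum_neg_distrib]

lemma mem_simplex_iff {d : ℕ} (y : Fin d → ℝ) :
    y ∈ simplexCoord d ↔ ∀ i : Fin (d + 1), bconst d i ≤ dotp (bvec d i) y := by
  constructor
  · rintro ⟨h1, h2⟩ i
    rw [dotp_bvec, bconst]
    split
    · simpa using h1 _
    · simpa using h2
  · intro h
    constructor
    · intro k
      have := h (Fin.castSucc k)
      rw [dotp_bvec, bconst] at this
      have hk : ((Fin.castSucc k : Fin (d+1)) : ℕ) < d := k.isLt
      rw [dif_pos hk, if_pos hk] at this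
      simpa using this
    · have := h (Fin.last d)
      rw [dotp_bvec, bconst] at this
      simp only [Fin.val_last, lt_irrefl, dite_false, if_false] at this
      linarith [this]

lemma farkas {d : ℕ} {α : Type} [DecidableEq α] (T : Finset α) :
    ∀ (a : α → Fin d → ℝ) (b : Fin d → ℝ),
    (∃ lam : α → ℝ, (∀ x ∈ T, 0 ≤ lam x) ∧ ∀ i', b i' = ∑ x ∈ T, lam x * a x i') ∨
    (∃ z : Fin d → ℝ, (∀ x ∈ T, 0 ≤ dotp (a x) z) ∧ dotp b z < 0) := by
  induction T using Finset.induction_on with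
  | empty =>
    intro a b
    by_cases hb : ∀ i', b i' = 0
    · exact Or.inl ⟨fun _ => 0, by simp, by simpa using hb⟩
    · right
      push_neg at hb
      obtain ⟨i0, hi0⟩ := hb
      refine ⟨-b, by simp, ?_⟩
      have h1 : 0 < dotp b b := by
        apply Finset.sum_pos' (fun i _ => mul_self_nonneg _)
        exact ⟨i0, Finset.mem_univ _, mul_self_pos.2 hi0⟩
      have h2 : dotp b (-b) = - dotp b b := by
        simp [dotp, Finset.sum_neg_distrib]
      linarith
  | @insert x₀ T hx₀ IH =>
    intro a b
    rcases IH a b with ⟨lam, hnn, hb⟩ | ⟨z, hz, hbz⟩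
    · left
      refine ⟨Function.update lam x₀ 0, ?_, ?_⟩
      · intro x hx
        rcases Finset.mem_insert.1 hx with rfl | hx
        · simp
        · rw [Function.update_of_ne (ne_of_mem_of_not_mem hx hx₀)]
          exact hnn x hx
      · intro i'
        rw [Finset.sum_insert hx₀, Function.update_self, zero_mul, zero_add, hb i']
        exact (Finset.sum_congr rfl fun x hx => by
          rw [Function.update_of_ne (ne_of_mem_of_not_mem hx hx₀)]).symm
    · by_cases hx0z : 0 ≤ dotp (a x₀) z
      · right
        refine ⟨z, ?_, hbz⟩
        intro x hx
        rcases Finset.mem_insert.1 hx with rfl | hx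
        · exact hx0z
        · exact hz x hx
      · push_neg at hx0z
        have hne : dotp (a x₀) z ≠ 0 := ne_of_lt hx0z
        set q : (Fin d → ℝ) → ℝ := fun v => dotp v z / dotp (a x₀) z with hq
        rcases IH (fun x i => a x i - q (a x) * a x₀ i) (fun i => b i - q b * a x₀ i)
          with ⟨lam, hnn, hb'⟩ | ⟨w, hw, hbw⟩
        · left
          set μ : ℝ := q b - ∑ x ∈ T, lam x * q (a x) with hμ
          have hqb : 0 < q b := div_pos_of_neg_of_neg hbz hx0z
          have hμpos : 0 ≤ μ := by
            have hterm : ∀ x ∈ T, lam x * q (a x) ≤ 0 := by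
              intro x hx
              apply mul_nonpos_of_nonneg_of_nonpos (hnn x hx)
              exact div_nonpos_of_nonneg_of_nonpos (hz x hx) (le_of_lt hx0z)
            have := Finset.sum_nonpos hterm
            simp only [hμ]; linarith
          refine ⟨Function.update lam x₀ μ, ?_, ?_⟩
          · intro x hx
            rcases Finset.mem_insert.1 hx with rfl | hx
            · simpa using hμpos
            · rw [Function.update_of_ne (ne_of_mem_of_not_mem hx hx₀)]
              exact hnn x hx
          · intro i'
            rw [Finset.sum_insert hx₀, Function.update_self]
            have hrw : ∑ x ∈ T, Function.update lam x₀ μ x * a x i'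
                = ∑ x ∈ T, lam x * a x i' :=
              Finset.sum_congr rfl fun x hx => by
                rw [Function.update_of_ne (ne_of_mem_of_not_mem hx hx₀)]
            rw [hrw]
            have h1 := hb' i'
            have h2 : ∑ x ∈ T, lam x * (a x i' - q (a x) * a x₀ i')
                = ∑ x ∈ T, lam x * a x i' - (∑ x ∈ T, lam x * q (a x)) * a x₀ i' := by
              rw [Finset.sum_mul, ← Finset.sum_sub_distrib]
              exact Finset.sum_congr rfl fun x _ => by ring
            rw [h2] at h1
            simp only [hμ]
            linarith
        · right
          refine ⟨fun i => w i - (dotp (a x₀) w / dotp (a x₀) z) * z i, ?_, ?_⟩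
          · intro x hx
            rcases Finset.mem_insert.1 hx with rfl | hx
            · rw [dotp_sub_mul_right]
              rw [div_mul_cancel₀ _ hne]
              simp
            · have := hw x hx
              rw [dotp_sub_mul_left] at this
              rw [dotp_sub_mul_right]
              have hqe : q (a x) * dotp (a x₀) w
                  = dotp (a x₀) w / dotp (a x₀) z * dotp (a x) z := by
                simp only [hq]; field_simp
              linarith
          · have := hbw
            rw [dotp_sub_mul_left] at this
            rw [dotp_sub_mul_right]
            have hqe : q b * dotp (a x₀) w
                = dotp (a x₀) w / dotp (a x₀) z * dotp b z := by
              simp only [hq]; field_simp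
            linarith

/-- Lemma (Farkas application): $-g_j$ lies in the conic hull of
$\{g_\ell : \ell \in S\} \cup \{e_i : i \in B\}$. The utilities are written as
$u^L(y,\ell) = g_\ell \cdot (y - y^*) + c_\ell$ with $c_\ell = u^L(y^*,\ell)$, $c_j = u^L(x,j)$,
and the key input `hkey` is that $\min_{\ell \in S} u^L(y,\ell) < V$ on $U_j(x)$. -/
theorem stmt_12 (d n : ℕ) (hn : 2 ≤ n) (j : Fin n)
    (g : Fin n → Fin d → ℝ) (c : Fin n → ℝ) (V : ℝ)
    (ystar : Fin d → ℝ) (hystar : ystar ∈ simplexCoord d)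
    (S : Finset (Fin n)) (hSdef : ∀ ℓ, ℓ ∈ S ↔ ℓ ≠ j ∧ c ℓ = V)
    (hSne : S.Nonempty)
    (B : Finset (Fin (d + 1))) (hBdef : ∀ i, i ∈ B ↔ dotp (bvec d i) ystar = bconst d i)
    (hcV : ∀ ℓ, ℓ ≠ j → V ≤ c ℓ)
    (hkey : ∀ y ∈ simplexCoord d, 0 < dotp (g j) (fun i => y i - ystar i) →
      ∃ ℓ ∈ S, dotp (g ℓ) (fun i => y i - ystar i) + c ℓ < V) :
    ∃ lam : Fin n → ℝ, ∃ mu : Fin (d + 1) → ℝ,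
      (∀ ℓ, 0 ≤ lam ℓ) ∧ (∀ ℓ, ℓ ∉ S → lam ℓ = 0) ∧
      (∀ i, 0 ≤ mu i) ∧ (∀ i, i ∉ B → mu i = 0) ∧
      ∀ i', -g j i' = (∑ ℓ, lam ℓ * g ℓ i') + ∑ i, mu i * bvec d i i' := by
  classical
  have hfar := farkas (S.disjSum B) (Sum.elim g (bvec d)) (-(g j))
  rcases hfar with ⟨Λ, hnn, hrep⟩ | ⟨z, hz, hbz⟩
  · refine ⟨fun ℓ => if ℓ ∈ S then Λ (Sum.inl ℓ) else 0,
      fun i => if i ∈ B then Λ (Sum.inr i) else 0, ?_, ?_, ?_, ?_, ?_⟩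
    · intro ℓ
      by_cases h : ℓ ∈ S
      · simpa [h] using hnn (Sum.inl ℓ) (Finset.inl_mem_disjSum.2 h)
      · simp [h]
    · intro ℓ h; simp [h]
    · intro i
      by_cases h : i ∈ B
      · simpa [h] using hnn (Sum.inr i) (Finset.inr_mem_disjSum.2 h)
      · simp [h]
    · intro i h; simp [h]
    · intro i'
      have h1 := hrep i'
      rw [Finset.sum_disjSum] at h1
      have h2 : ∑ ℓ, (if ℓ ∈ S then Λ (Sum.inl ℓ) else 0) * g ℓ i'
          = ∑ ℓ ∈ S, Λ (Sum.inl ℓ) * g ℓ i' := by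
        rw [← Finset.sum_subset (Finset.subset_univ S)
          (fun x _ hx => by simp [hx])]
        exact Finset.sum_congr rfl fun x hx => by simp [hx]
      have h3 : ∑ i, (if i ∈ B then Λ (Sum.inr i) else 0) * bvec d i i'
          = ∑ i ∈ B, Λ (Sum.inr i) * bvec d i i' := by
        rw [← Finset.sum_subset (Finset.subset_univ B)
          (fun x _ hx => by simp [hx])]
        exact Finset.sum_congr rfl fun x hx => by simp [hx]
      rw [h2, h3]
      simpa using h1
  · exfalso
    have hgz : 0 < dotp (g j) z := by
      rw [dotp_neg_left] at hbz; linarith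
    have hzS : ∀ ℓ ∈ S, 0 ≤ dotp (g ℓ) z := fun ℓ h =>
      hz (Sum.inl ℓ) (Finset.inl_mem_disjSum.2 h)
    have hzB : ∀ i ∈ B, 0 ≤ dotp (bvec d i) z := fun i h =>
      hz (Sum.inr i) (Finset.inr_mem_disjSum.2 h)
    have hsl : ∀ i : Fin (d+1), bconst d i ≤ dotp (bvec d i) ystar :=
      (mem_simplex_iff ystar).1 hystar
    -- choose step size t
    set τ : Fin (d+1) → ℝ := fun i =>
      if dotp (bvec d i) z < 0 ∧ i ∉ B then
        (dotp (bvec d i) ystar - bconst d i) / (-(dotp (bvec d i) z)) else 1 with hτ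
    have hτpos : ∀ i, 0 < τ i := by
      intro i
      by_cases h : dotp (bvec d i) z < 0 ∧ i ∉ B
      · have hslack : 0 < dotp (bvec d i) ystar - bconst d i := by
          have h1 := hsl i
          have h2 : dotp (bvec d i) ystar ≠ bconst d i := fun he => h.2 ((hBdef i).2 he)
          cases lt_or_eq_of_le h1 with
          | inl h3 => linarith
          | inr h3 => exact absurd h3.symm h2
        simp only [hτ, if_pos h]
        exact div_pos hslack (by linarith [h.1])
      · simp only [hτ, if_neg h]; norm_num
    set t : ℝ := Finset.univ.inf' ⟨0, Finset.mem_univ 0⟩ τ with ht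
    have htpos : 0 < t := by
      rw [ht]
      exact (Finset.lt_inf'_iff _).2 fun i _ => hτpos i
    have htle : ∀ i, t ≤ τ i := fun i => Finset.inf'_le τ (Finset.mem_univ i)
    set y : Fin d → ℝ := fun i => ystar i + t * z i with hy
    have hymem : y ∈ simplexCoord d := by
      rw [mem_simplex_iff]
      intro i
      have hdot : dotp (bvec d i) y = dotp (bvec d i) ystar + t * dotp (bvec d i) z := by
        rw [hy, dotp_add_right, dotp_mul_right]
      rw [hdot]
      by_cases hB : i ∈ B
      · have := hzB i hB
        nlinarith [hsl i]
      · by_cases hzi : 0 ≤ dotp (bvec d i) z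
        · nlinarith [hsl i]
        · push_neg at hzi
          have hti := htle i
          simp only [hτ] at hti
          rw [if_pos (show dotp (bvec d i) z < 0 ∧ i ∉ B from ⟨hzi, hB⟩)] at hti
          have hmul : t * (-(dotp (bvec d i) z)) ≤ dotp (bvec d i) ystar - bconst d i :=
            (le_div_iff₀ (by linarith : (0:ℝ) < -(dotp (bvec d i) z))).1 hti
          nlinarith
    have hdiff : (fun i => y i - ystar i) = fun i => t * z i := by
      funext i; simp [hy]
    have hpos : 0 < dotp (g j) (fun i => y i - ystar i) := by
      rw [hdiff, dotp_mul_right]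
      exact mul_pos htpos hgz
    obtain ⟨ℓ, hℓS, hlt⟩ := hkey y hymem hpos
    have hcℓ : c ℓ = V := ((hSdef ℓ).1 hℓS).2
    rw [hdiff, dotp_mul_right, hcℓ] at hlt
    nlinarith [hzS ℓ hℓS]
end
end

section
/- (Payoff-inducibility characterization, easy direction plus domination construction.) Let $u^L \in \mathbb{R}^{m \times n}$ and $(\mathbf{x},j)$ with $u^L(\mathbf{x},j) \geq M_{-j} := \max_{\mathbf{y} \in \Delta^{m-1}} \min_{\ell \neq j} u^L(\mathbf{y},\ell)$. Define $\tilde{u}^F(\mathbf{y},\ell) = -u^L(\mathbf{y},\ell)$ for $\ell \neq j$ and $\tilde{u}^F(\mathbf{y},j) = -u^L(\mathbf{y},k) + (u^L(\mathbf{x},j) - u^L(\mathbf{y},j))$ for $k \in \arg\min_{\ell \neq j} u^L(\mathbf{x},\ell)$. Then $(\mathbf{x},j)$ is an SSE of $(u^L,\tilde{u}^F)$. -/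
open Finset

noncomputable section

/-- Easy case: if $u^L(x,j) \ge M_{-j}$, the constructed matrix induces $(x,j)$ as an SSE. -/
theorem stmt_14 (m n : ℕ) (hn : 2 ≤ n) (uL : Fin m → Fin n → ℝ)
    (x : Fin m → ℝ) (hx : x ∈ simplex m) (j : Fin n)
    (hM : ∀ y ∈ simplex m, ∃ ℓ, ℓ ≠ j ∧ util uL y ℓ ≤ util uL x j)
    (k : Fin n) (hkj : k ≠ j) (hk : ∀ ℓ, ℓ ≠ j → util uL x k ≤ util uL x ℓ)
    (v : (Fin m → ℝ) → Fin n → ℝ)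
    (hv : ∀ y ℓ, v y ℓ = if ℓ = j then -util uL y k + (util uL x j - util uL y j)
      else -util uL y ℓ) :
    (∀ ℓ, v x ℓ ≤ v x j) ∧
    ∀ y ∈ simplex m, ∀ ℓ, (∀ k', v y k' ≤ v y ℓ) → util uL y ℓ ≤ util uL x j := by
  constructor
  · intro ℓ
    rw [hv, hv]
    by_cases h : ℓ = j
    · simp [h]
    · rw [if_neg h, if_pos rfl]
      have := hk ℓ h
      linarith
  · intro y hy ℓ hbr
    by_cases h : ℓ = j
    · subst h
      have := hbr k
      rw [hv, hv, if_neg hkj, if_pos rfl] at this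
      linarith
    · obtain ⟨ℓ', hℓ'j, hℓ'⟩ := hM y hy
      have := hbr ℓ'
      rw [hv, hv, if_neg hℓ'j, if_neg h] at this
      linarith
end
end

section
/- If $U_j(\mathbf{x}) = \{\mathbf{y} \in \Delta^{m-1} : u^L(\mathbf{y},j) > u^L(\mathbf{x},j)\} = \emptyset$, then the payoff matrix $\tilde{u}^F$ with $\tilde{u}^F(i,j) = 1$ and $\tilde{u}^F(i,\ell) = 0$ for all $i \in [m]$, $\ell \neq j$, induces $(\mathbf{x},j)$ as an SSE of $(u^L,\tilde{u}^F)$; moreover if additionally $u^L(\mathbf{y},j) < u^L(\mathbf{x},j)$ for all $\mathbf{y} \in \Delta^{m-1} \setminus \{\mathbf{x}\}$, then $(\mathbf{x},j)$ is the unique SSE of $(u^L,\tilde{u}^F)$. -/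
open Finset

noncomputable section

/-- \`(x, j)\` is a strong Stackelberg equilibrium of the game with leader matrix \`uL\`
and follower matrix \`v\`. -/
def SSE {m n : ℕ} (uL v : Fin m → Fin n → ℝ) (x : Fin m → ℝ) (j : Fin n) : Prop :=
  x ∈ simplex m ∧ (∀ ℓ, util v x ℓ ≤ util v x j) ∧
    ∀ y ∈ simplex m, ∀ ℓ, (∀ k, util v y k ≤ util v y ℓ) → util uL y ℓ ≤ util uL x j

lemma util_v {m n : ℕ} (j : Fin n) (v : Fin m → Fin n → ℝ)
    (hv : ∀ i ℓ, v i ℓ = if ℓ = j then 1 else 0) (y : Fin m → ℝ) (hy : y ∈ simplex m)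
    (ℓ : Fin n) : util v y ℓ = if ℓ = j then 1 else 0 := by
  unfold util
  simp only [hv]
  by_cases h : ℓ = j <;> simp [h, hy.2]

/-- If $U_j(x) = \emptyset$, the dominant-column matrix induces $(x,j)$; if moreover the
maximizer of $u^L(\cdot,j)$ is strict, $(x,j)$ is the unique SSE. -/
theorem stmt_16 (m n : ℕ) (hn : 2 ≤ n) (uL : Fin m → Fin n → ℝ)
    (x : Fin m → ℝ) (hx : x ∈ simplex m) (j : Fin n)
    (hU : ∀ y ∈ simplex m, util uL y j ≤ util uL x j)
    (v : Fin m → Fin n → ℝ)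
    (hv : ∀ i ℓ, v i ℓ = if ℓ = j then 1 else 0) :
    SSE uL v x j ∧
    ((∀ y ∈ simplex m, y ≠ x → util uL y j < util uL x j) →
      ∀ y ℓ, SSE uL v y ℓ → y = x ∧ ℓ = j) := by
  have key : ∀ y ∈ simplex m, ∀ ℓ, (∀ k, util v y k ≤ util v y ℓ) → ℓ = j := by
    intro y hy ℓ h
    by_contra hne
    have := h j
    rw [util_v j v hv y hy, util_v j v hv y hy] at this
    simp [hne] at this
    linarith
  have hsse : SSE uL v x j := by
    refine ⟨hx, ?_, ?_⟩
    · intro ℓ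
      rw [util_v j v hv x hx, util_v j v hv x hx]
      by_cases h : ℓ = j <;> simp [h]
    · intro y hy ℓ h
      have hℓ := key y hy ℓ h
      subst hℓ
      exact hU y hy
  refine ⟨hsse, ?_⟩
  intro hstrict y ℓ hy
  obtain ⟨hy1, hy2, hy3⟩ := hy
  have hℓ : ℓ = j := key y hy1 ℓ hy2
  have hbr : ∀ k, util v x k ≤ util v x j := hsse.2.1
  have h1 : util uL x j ≤ util uL y ℓ := hy3 x hx j hbr
  rw [hℓ] at h1
  by_cases hxy : y = x
  · exact ⟨hxy, hℓ⟩
  · exact absurd h1 (not_le.mpr (hstrict y hy1 hxy))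
end
end

section
/- (Example: strongly inducible can be much worse than payoff-inducible.) Let $u^L = \begin{pmatrix} 1/4 & 1 \\ 0 & 1/3 \\ 1/4 & 2/3 \end{pmatrix}$. For any $\mathbf{y} \in \Delta^2$ and any payoff matrix $\tilde{u}^F \in \mathbb{R}^{3 \times 2}$, the profile $(\mathbf{y},1)$ is not the unique SSE of $(u^L,\tilde{u}^F)$: either $(u^L,\tilde{u}^F)$ has an SSE other than $(\mathbf{y},1)$, or $(\mathbf{y},1)$ is not an SSE at all. -/
open Finset

noncomputable section

notation "uL" => ![![(1:ℝ)/4, 1], ![0, 1/3], ![1/4, 2/3]]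

lemma util0 (x : Fin 3 → ℝ) : util uL x 0 = x 0 * (1/4) + x 2 * (1/4) := by
  simp [util, Fin.sum_univ_three]

lemma util1 (x : Fin 3 → ℝ) : util uL x 1 = x 0 + x 1 * (1/3) + x 2 * (2/3) := by
  simp [util, Fin.sum_univ_three]

lemma mem_simplex (x : Fin 3 → ℝ) (hx : x ∈ simplex 3) :
    0 ≤ x 0 ∧ 0 ≤ x 1 ∧ 0 ≤ x 2 ∧ x 0 + x 1 + x 2 = 1 :=
  ⟨hx.1 0, hx.1 1, hx.1 2, by simpa [Fin.sum_univ_three] using hx.2⟩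

lemma e_mem (a b c : ℝ) (ha : 0 ≤ a) (hb : 0 ≤ b) (hc : 0 ≤ c) (h : a + b + c = 1) :
    ![a, b, c] ∈ simplex 3 := by
  constructor
  · intro i; fin_cases i <;> simpa
  · simpa [Fin.sum_univ_three] using h

/-- Example: no profile of the form $(y, 1)$ can be strongly induced. -/
theorem stmt_17 (v : Fin 3 → Fin 2 → ℝ) (y : Fin 3 → ℝ) :
    ¬ (SSE ![![(1:ℝ)/4, 1], ![0, 1/3], ![1/4, 2/3]] v y 0 ∧
       ∀ z ℓ, SSE ![![(1:ℝ)/4, 1], ![0, 1/3], ![1/4, 2/3]] v z ℓ → z = y ∧ ℓ = 0) := by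
  rintro ⟨⟨hy, _, hopt⟩, huniq⟩
  obtain ⟨hy0, hy1, hy2, hys⟩ := mem_simplex y hy
  have hyle : util uL y 0 ≤ 1/4 := by rw [util0]; linarith
  by_cases h : ∃ z ∈ simplex 3, util v z 0 ≤ util v z 1
  · obtain ⟨z, hz, hle⟩ := h
    obtain ⟨hz0, hz1, hz2, hzs⟩ := mem_simplex z hz
    have h1 := hopt z hz 1 (by intro k; fin_cases k <;> simp [hle])
    rw [util1] at h1
    linarith
  · push_neg at h
    have hsse : ∀ a c : ℝ, 0 ≤ a → 0 ≤ c → a + c = 1 →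
        SSE uL v ![a, 0, c] 0 := by
      intro a c ha hc hac
      have hmem := e_mem a 0 c ha le_rfl hc (by linarith)
      refine ⟨hmem, ?_, ?_⟩
      · intro ℓ; fin_cases ℓ
        · exact le_refl _
        · exact (h _ hmem).le
      · intro w hw ℓ hbr
        obtain ⟨hw0, hw1, hw2, hws⟩ := mem_simplex w hw
        fin_cases ℓ
        · show util uL w 0 ≤ util uL ![a, 0, c] 0
          rw [util0, util0]
          simp only [Matrix.cons_val_zero, Matrix.cons_val_two, Matrix.tail_cons,
            Matrix.head_cons]
          linarith
        · exact absurd (hbr 0) (not_le.2 (h w hw))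
    have h1 := (huniq _ 0 (hsse 1 0 (by norm_num) le_rfl (by norm_num))).1
    have h2 := (huniq _ 0 (hsse 0 1 le_rfl (by norm_num) (by norm_num))).1
    have := congrFun (h1.trans h2.symm) 0
    norm_num at this
end
end
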